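/- If v is a positive C^2 solution on [0,L] of -d v'' = f(v) with v(0)=0 and v'(L)=0, where d>0 and f satisfies f(0)=f(1)=0, 0<f(s)<f'(0)s on (0,1), f<0 on (1,∞), then d(f'(0))^{-1}·(π/(2L))^2 < 1, i.e. f'(0)/d > (π/(2L))^2. -/

import Mathlib

open Real Set

theorem stmt_0 (d L : ℝ) (hd : 0 < d) (hL : 0 < L)
    (f : ℝ → ℝ) (hf : ContDiff ℝ 1 f)
    (hf0 : f 0 = 0) (hf1 : f 1 = 0)
    (hfpos : ∀ s ∈ Set.Ioo (0:ℝ) 1, 0 < f s ∧ f s < deriv f 0 * s)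
    (hfneg : ∀ s, 1 < s → f s < 0)
    (v : ℝ → ℝ) (hv : ContDiff ℝ 2 v)
    (hvpos : ∀ y ∈ Set.Ioc 0 L, 0 < v y)
    (hode : ∀ y ∈ Set.Ioo 0 L, -d * deriv (deriv v) y = f (v y))
    (hv0 : v 0 = 0) (hvL : deriv v L = 0) :
    deriv f 0 / d > (Real.pi / (2 * L)) ^ 2 := by
  set k : ℝ := Real.pi / (2 * L) with hk
  have hkpos : 0 < k := by positivity
  have hkL : k * L = Real.pi / 2 := by
    field_simp [hk]
    rw [hk]; field_simp [hL.ne']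
  -- f'(0) > 0
  have hf'0 : 0 < deriv f 0 := by
    have h := hfpos (1/2) (by norm_num)
    nlinarith [h.1, h.2]
  -- f s < f'(0) * s for all s > 0
  have hkey : ∀ s : ℝ, 0 < s → f s < deriv f 0 * s := by
    intro s hs
    rcases lt_trichotomy s 1 with h | h | h
    · exact (hfpos s ⟨hs, h⟩).2
    · rw [h, hf1, mul_one]; exact hf'0
    · exact (hfneg s h).trans (by positivity)
  -- smoothness facts
  have hvc : Continuous v := hv.continuous
  have hv1 : ContDiff ℝ 1 (deriv v) := (hv.iterate_deriv' 1 1).of_le le_rfl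
  have hv'c : Continuous (deriv v) := hv1.continuous
  have hv'd : ∀ y : ℝ, HasDerivAt (deriv v) (deriv (deriv v) y) y :=
    fun y => (hv1.differentiable one_ne_zero y).hasDerivAt
  have hvd : ∀ y : ℝ, HasDerivAt v (deriv v y) y :=
    fun y => (hv.differentiable two_ne_zero y).hasDerivAt
  have hfc : Continuous f := hf.continuous
  -- test function φ y = sin (k y)
  set φ : ℝ → ℝ := fun y => Real.sin (k * y) with hφ
  have hφd : ∀ y : ℝ, HasDerivAt φ (k * Real.cos (k * y)) y := by
    intro y
    have := (Real.hasDerivAt_sin (k * y)).comp y ((hasDerivAt_id y).const_mul k)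
    simpa [mul_comm, hφ, Function.comp_def] using this
  have hφ'd : ∀ y : ℝ, HasDerivAt (fun y => k * Real.cos (k * y)) (-(k^2) * Real.sin (k * y)) y := by
    intro y
    have := ((Real.hasDerivAt_cos (k * y)).comp y ((hasDerivAt_id y).const_mul k)).const_mul k
    refine this.congr_deriv ?_
    ring
  -- the combined function W and its derivative g
  set W : ℝ → ℝ := fun y => d * (deriv v y * φ y - v y * (k * Real.cos (k * y))) with hW
  set g : ℝ → ℝ := fun y => d * k^2 * (v y * φ y) - f (v y) * φ y with hg
  have hWd : ∀ y ∈ Ioo 0 L, HasDerivAt W (g y) y := by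
    intro y hy
    have h1 : HasDerivAt (fun y => deriv v y * φ y)
        (deriv (deriv v) y * φ y + deriv v y * (k * Real.cos (k * y))) y :=
      (hv'd y).mul (hφd y)
    have h2 : HasDerivAt (fun y => v y * (k * Real.cos (k * y)))
        (deriv v y * (k * Real.cos (k * y)) + v y * (-(k^2) * Real.sin (k * y))) y :=
      (hvd y).mul (hφ'd y)
    have h3 := ((h1.sub h2)).const_mul d
    refine h3.congr_deriv (Eq.symm ?_)
    have hode' := hode y hy
    have : d * deriv (deriv v) y = -f (v y) := by linarith
    simp only [hg, hφ]
    linear_combination (-Real.sin (k * y)) * this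
  have hWc : ContinuousOn W (Icc 0 L) := by
    apply Continuous.continuousOn
    fun_prop
  have hgc : Continuous g := by fun_prop
  have hint : IntervalIntegrable g MeasureTheory.volume 0 L := hgc.intervalIntegrable 0 L
  have hftc := intervalIntegral.integral_eq_sub_of_hasDerivAt_of_le hL.le hWc hWd hint
  have hWL : W L = 0 := by
    simp only [hW, hφ, hkL, hvL, hv0, Real.cos_pi_div_two]
    ring
  have hW0 : W 0 = 0 := by
    simp [hW, hφ, hv0]
  rw [hWL, hW0, sub_zero] at hftc
  -- so ∫ g = 0, i.e. d k² ∫ vφ = ∫ f(v) φ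
  have hsplit : ∫ y in (0:ℝ)..L, g y =
      d * k^2 * (∫ y in (0:ℝ)..L, v y * φ y) - ∫ y in (0:ℝ)..L, f (v y) * φ y := by
    rw [hg]
    rw [intervalIntegral.integral_sub
      ((by fun_prop : Continuous fun y => d * k^2 * (v y * φ y)).intervalIntegrable 0 L)
      ((by fun_prop : Continuous fun y => f (v y) * φ y).intervalIntegrable 0 L),
      intervalIntegral.integral_const_mul]
  rw [hsplit] at hftc
  -- φ positive on (0, L]
  have hφpos : ∀ y ∈ Ioc (0:ℝ) L, 0 < φ y := by
    intro y hy
    apply Real.sin_pos_of_pos_of_lt_pi (mul_pos hkpos hy.1)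
    calc k * y ≤ k * L := by nlinarith [hy.2]
    _ = Real.pi / 2 := hkL
    _ < Real.pi := by linarith [Real.pi_pos]
  -- ∫ vφ > 0
  have hIpos : 0 < ∫ y in (0:ℝ)..L, v y * φ y := by
    have := intervalIntegral.integral_lt_integral_of_continuousOn_of_le_of_exists_lt
      (f := fun _ => (0:ℝ)) (g := fun y => v y * φ y) hL
      continuousOn_const (by fun_prop)
      (fun x hx => (mul_pos (hvpos x hx) (hφpos x hx)).le)
      ⟨L, ⟨hL.le, le_rfl⟩, mul_pos (hvpos L ⟨hL, le_rfl⟩) (hφpos L ⟨hL, le_rfl⟩)⟩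
    simpa using this
  -- ∫ f(v)φ < f'(0) ∫ vφ
  have hIlt : (∫ y in (0:ℝ)..L, f (v y) * φ y) < deriv f 0 * ∫ y in (0:ℝ)..L, v y * φ y := by
    rw [← intervalIntegral.integral_const_mul]
    apply intervalIntegral.integral_lt_integral_of_continuousOn_of_le_of_exists_lt hL
      (by fun_prop) (by fun_prop)
    · intro x hx
      have := hkey (v x) (hvpos x hx)
      nlinarith [hφpos x hx]
    · refine ⟨L, ⟨hL.le, le_rfl⟩, ?_⟩
      have := hkey (v L) (hvpos L ⟨hL, le_rfl⟩)
      nlinarith [hφpos L ⟨hL, le_rfl⟩]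
  -- conclude
  have hmain : d * k^2 < deriv f 0 := by
    have heq : d * k^2 * (∫ y in (0:ℝ)..L, v y * φ y) = ∫ y in (0:ℝ)..L, f (v y) * φ y := by
      linarith
    exact lt_of_mul_lt_mul_right (by linarith) hIpos.le
  rw [gt_iff_lt, lt_div_iff₀ hd]
  linarith [hmain]
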